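/- Let (φ_t) be a non-elliptic semigroup in 𝔻 with Koenigs function h, and let Δ be a parabolic petal of (φ_t), i.e., h(Δ) is a maximal horizontal half-plane in Ω = h(𝔻). Then for every z ∈ Δ, lim_{t→−∞} d_𝔻(z, φ_t(z))/t = 0. -/

import Mathlib

open Filter Set Topology

/-- The inverse hyperbolic tangent. -/
noncomputable def arctanh (x : ℝ) : ℝ := (1 / 2) * Real.log ((1 + x) / (1 - x))

/-- The hyperbolic distance of the unit disc:
`d_𝔻(z, w) = arctanh |(z - w)/(1 - conj z · w)|`. -/
noncomputable def dD (z w : ℂ) : ℝ :=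
  arctanh (‖(z - w) / (1 - (starRingEnd ℂ) z * w)‖)

def unitDisc : Set ℂ := {z : ℂ | ‖z‖ < 1}

/-- A one-parameter semigroup of holomorphic self-maps of the unit disc
(which is not a group): `φ 0 = id`, the semigroup property holds for
nonnegative times, and `φ t → id` locally uniformly as `t → 0⁺`. -/
structure IsSemigroupD (φ : ℝ → ℂ → ℂ) : Prop where
  mapsTo : ∀ t : ℝ, 0 ≤ t → Set.MapsTo (φ t) unitDisc unitDisc
  holo : ∀ t : ℝ, 0 ≤ t → DifferentiableOn ℂ (φ t) unitDisc
  id0 : ∀ z ∈ unitDisc, φ 0 z = z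
  comp : ∀ s t : ℝ, 0 ≤ s → 0 ≤ t → ∀ z ∈ unitDisc, φ (s + t) z = φ s (φ t z)
  cont0 : TendstoLocallyUniformlyOn (fun t : ℝ => φ t) id (nhdsWithin 0 (Set.Ioi 0)) unitDisc
  notGroup : ∃ t : ℝ, 0 < t ∧ ¬ Set.BijOn (φ t) unitDisc unitDisc

/-- The backward invariant set `W = ⋂_{t ≥ 0} φ_t(𝔻)`. -/
def backwardInvSet (φ : ℝ → ℂ → ℂ) : Set ℂ :=
  ⋂ t ∈ Set.Ici (0 : ℝ), φ t '' unitDisc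

/-- A petal: a nonempty connected component of the interior of the backward invariant set. -/
def IsPetal (φ : ℝ → ℂ → ℂ) (Δ : Set ℂ) : Prop :=
  Δ.Nonempty ∧ ∃ z ∈ interior (backwardInvSet φ),
    Δ = connectedComponentIn (interior (backwardInvSet φ)) z

/-- `τ ∈ ∂𝔻` is the Denjoy–Wolff point of `φ` (non-elliptic case). -/
def IsDenjoyWolffBoundary (φ : ℝ → ℂ → ℂ) (τ : ℂ) : Prop :=
  ‖τ‖ = 1 ∧ ∀ z ∈ unitDisc, Filter.Tendsto (fun t => φ t z) Filter.atTop (nhds τ)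

/-- The Koenigs function of a non-elliptic semigroup. -/
structure IsKoenigsNE (φ : ℝ → ℂ → ℂ) (h : ℂ → ℂ) : Prop where
  holo : DifferentiableOn ℂ h unitDisc
  inj : Set.InjOn h unitDisc
  zero : h 0 = 0
  semiconj : ∀ t : ℝ, 0 ≤ t → ∀ z ∈ unitDisc, h (φ t z) = h z + (t : ℂ)

/-- A horizontal half-plane `{Im z > a}` or `{Im z < a}`. -/
def IsHorizHalfPlane (H : Set ℂ) : Prop :=
  ∃ a : ℝ, H = {z : ℂ | a < z.im} ∨ H = {z : ℂ | z.im < a}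

/-- `Δ` is a parabolic petal: a petal whose image `h(Δ)` is a maximal horizontal
half-plane contained in `Ω = h(𝔻)`. -/
def IsParabolicPetal (φ : ℝ → ℂ → ℂ) (h : ℂ → ℂ) (Δ : Set ℂ) : Prop :=
  IsPetal φ Δ ∧ IsHorizHalfPlane (h '' Δ) ∧ h '' Δ ⊆ h '' unitDisc ∧
  ∀ H : Set ℂ, IsHorizHalfPlane H → h '' Δ ⊂ H → ¬ H ⊆ h '' unitDisc

lemma unitDisc_eq_ball : unitDisc = Metric.ball (0:ℂ) 1 := by
  ext z; simp [unitDisc, Metric.mem_ball, Complex.dist_eq]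

lemma isOpen_unitDisc : IsOpen unitDisc := by
  rw [unitDisc_eq_ball]; exact Metric.isOpen_ball

lemma normSq_identity (z u : ℂ) :
    Complex.normSq (1 - (starRingEnd ℂ) z * u) - Complex.normSq (u - z)
      = (1 - Complex.normSq z) * (1 - Complex.normSq u) := by
  simp only [Complex.normSq_apply, Complex.sub_re, Complex.sub_im, Complex.one_re, Complex.one_im,
    Complex.mul_re, Complex.mul_im, Complex.conj_re, Complex.conj_im]
  ring

lemma one_sub_conj_mul_ne_zero {z u : ℂ} (hz : ‖z‖ < 1) (hu : ‖u‖ < 1) :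
    1 - (starRingEnd ℂ) z * u ≠ 0 := by
  intro hcon
  have h1 : (1 : ℂ) = (starRingEnd ℂ) z * u := sub_eq_zero.mp hcon
  have h2 : ‖(starRingEnd ℂ) z * u‖ < 1 := by
    rw [norm_mul, Complex.norm_conj]
    nlinarith [norm_nonneg z, norm_nonneg u]
  rw [← h1] at h2; simp at h2

lemma mobius_abs_lt_one {z u : ℂ} (hz : ‖z‖ < 1) (hu : ‖u‖ < 1) :
    ‖(u - z) / (1 - (starRingEnd ℂ) z * u)‖ < 1 := by
  have hd := one_sub_conj_mul_ne_zero hz hu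
  rw [norm_div, div_lt_one (norm_pos_iff.mpr hd), Complex.norm_def, Complex.norm_def]
  apply Real.sqrt_lt_sqrt (Complex.normSq_nonneg _)
  have hns := normSq_identity z u
  have h1 : Complex.normSq z < 1 := by
    have := Complex.sq_norm z; nlinarith [norm_nonneg z]
  have h2 : Complex.normSq u < 1 := by
    have := Complex.sq_norm u; nlinarith [norm_nonneg u]
  nlinarith

lemma arctanh_nonneg {x : ℝ} (h0 : 0 ≤ x) (h1 : x < 1) : 0 ≤ arctanh x := by
  unfold arctanh
  have : (1:ℝ) ≤ (1 + x) / (1 - x) := by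
    rw [le_div_iff₀ (by linarith)]; linarith
  have := Real.log_nonneg this; linarith

lemma arctanh_mono {x y : ℝ} (h0 : 0 ≤ x) (hxy : x ≤ y) (hy : y < 1) : arctanh x ≤ arctanh y := by
  unfold arctanh
  have hx1 : x < 1 := lt_of_le_of_lt hxy hy
  have h1 : (0:ℝ) < (1 + x) / (1 - x) := div_pos (by linarith) (by linarith)
  have h2 : (1 + x) / (1 - x) ≤ (1 + y) / (1 - y) := by
    rw [div_le_div_iff₀ (by linarith) (by linarith)]; nlinarith
  have := Real.log_le_log h1 h2
  linarith

lemma arctanh_bound {t β : ℝ} (hβ : 0 < β) :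
    arctanh (|t| / Real.sqrt (t ^ 2 + 4 * β ^ 2)) ≤ Real.log (1 + |t| / β) := by
  set T := |t| with hT
  have hT0 : 0 ≤ T := abs_nonneg t
  have hT2 : T ^ 2 = t ^ 2 := sq_abs t
  set s := Real.sqrt (t ^ 2 + 4 * β ^ 2) with hs
  have hs2 : s ^ 2 = t ^ 2 + 4 * β ^ 2 := Real.sq_sqrt (by positivity)
  have hspos : 0 < s := Real.sqrt_pos.mpr (by positivity)
  have hts : T < s := by nlinarith
  have hsle : s ≤ T + 2 * β := by nlinarith
  have hprod : (s - T) * (s + T) = 4 * β ^ 2 := by nlinarith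
  have hd1 : (0:ℝ) < 1 - T / s := by
    rw [sub_pos, div_lt_one hspos]; exact hts
  have h1 : (1 + T / s) / (1 - T / s) = (s + T) / (s - T) := by
    rw [show 1 + T / s = (s + T) / s by field_simp [hspos.ne'],
      show 1 - T / s = (s - T) / s by field_simp [hspos.ne']]
    rw [div_div_div_cancel_right₀]
    exact hspos.ne'
  have hA : s + T ≤ 2 * (β + T) := by linarith
  have hposST : 0 < s + T := by linarith
  have h4 : (s + T) ^ 2 ≤ 4 * (β + T) ^ 2 := by nlinarith
  have h5 : β ^ 2 * ((s + T) ^ 2) ≤ (β + T) ^ 2 * ((s - T) * (s + T)) := by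
    rw [hprod]
    nlinarith [mul_le_mul_of_nonneg_left h4 (sq_nonneg β)]
  have key : β ^ 2 * (s + T) ≤ (β + T) ^ 2 * (s - T) := by
    have h6 : β ^ 2 * (s + T) * (s + T) ≤ (β + T) ^ 2 * (s - T) * (s + T) := by nlinarith [h5]
    exact le_of_mul_le_mul_right h6 hposST
  have hineq : (s + T) / (s - T) ≤ ((β + T) / β) ^ 2 := by
    rw [div_pow, div_le_div_iff₀ (by linarith) (by positivity)]
    nlinarith [key]
  have hlogle : Real.log ((s + T) / (s - T)) ≤ Real.log (((β + T) / β) ^ 2) :=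
    Real.log_le_log (div_pos (by linarith) (by linarith)) hineq
  have hfin : Real.log (((β + T) / β) ^ 2) = 2 * Real.log ((β + T) / β) := by
    rw [Real.log_pow]; push_cast; ring
  have hlast : (β + T) / β = 1 + T / β := by field_simp
  unfold arctanh
  rw [h1]
  rw [hlast] at hfin hlogle
  linarith [hlogle, hfin.le, hfin.ge]
lemma deriv_ne_zero_of_injOn {f : ℂ → ℂ} {s : Set ℂ} (hs : IsOpen s)
    (hf : DifferentiableOn ℂ f s) (hinj : Set.InjOn f s) {u : ℂ} (hu : u ∈ s) :
    deriv f u ≠ 0 := by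
  intro hderiv
  have hfa : AnalyticAt ℂ f u := hf.analyticAt (hs.mem_nhds hu)
  have hga : AnalyticAt ℂ (fun w => f w - f u) u := hfa.sub analyticAt_const
  by_cases htop : analyticOrderAt (fun w => f w - f u) u = ⊤
  · -- locally constant case
    have hev : ∀ᶠ w in 𝓝 u, f w - f u = 0 := analyticOrderAt_eq_top.mp htop
    have hev' : ∀ᶠ w in 𝓝[≠] u, (w ∈ s ∧ f w - f u = 0) ∧ w ≠ u := by
      refine Filter.Eventually.and (nhdsWithin_le_nhds ?_) self_mem_nhdsWithin
      exact (hs.eventually_mem hu).and hev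
    obtain ⟨w, ⟨hws, hfw⟩, hne⟩ := hev'.exists
    exact hne (hinj hws hu (by linear_combination hfw))
  · obtain ⟨n, hn⟩ : ∃ n : ℕ, analyticOrderAt (fun w => f w - f u) u = n := by
      lift analyticOrderAt (fun w => f w - f u) u to ℕ using htop with n hn
      exact ⟨n, rfl⟩
    obtain ⟨G, hGa, hG0, hev⟩ := hga.analyticOrderAt_eq_natCast.mp hn
    have hn0 : n ≠ 0 := by
      rintro rfl
      apply hG0
      have := hev.self_of_nhds
      simpa using this.symm
    have hn1 : n ≠ 1 := by
      rintro rfl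
      have hG : HasDerivAt G (deriv G u) u := hGa.differentiableAt.hasDerivAt
      have hprod : HasDerivAt (fun w => (w - u) ^ 1 • G w) (G u) u := by
        have := ((hasDerivAt_id u).sub_const u).mul hG
        simpa [Pi.mul_def] using this
      have e1 : deriv (fun w => f w - f u) u = G u := by
        rw [Filter.EventuallyEq.deriv_eq hev]
        exact hprod.deriv
      have e2 : deriv (fun w => f w - f u) u = deriv f u := by
        simp [deriv_sub_const]
      exact hG0 (by rw [← e1, e2, hderiv])
    have hn2 : 2 ≤ n := by omega
    -- construct n-th root
    obtain ⟨r, hr⟩ := IsAlgClosed.exists_pow_nat_eq (G u) (show 0 < n by omega)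
    have hrne : r ≠ 0 := by
      intro h0
      apply hG0
      rw [← hr, h0, zero_pow hn0]
    set ρ : ℂ → ℂ := fun w => r * Complex.exp (Complex.log (G w / G u) / (n : ℂ)) with hρ
    have hρu : ρ u = r := by
      simp [hρ, div_self hG0, Complex.log_one]
    -- strict derivative of ρ at u
    obtain ⟨p, hp⟩ := hGa
    have hGs : HasStrictDerivAt G (p 1 fun _ => 1) u := hp.hasStrictDerivAt
    have hqs : HasStrictDerivAt (fun w => G w / G u) ((p 1 fun _ => 1) / G u) u :=
      hGs.div_const (G u)
    have hmem1 : (G u / G u) ∈ Complex.slitPlane := by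
      rw [div_self hG0]; exact Complex.one_mem_slitPlane
    have hlogs : HasStrictDerivAt (fun w => Complex.log (G w / G u))
        ((G u / G u)⁻¹ * ((p 1 fun _ => 1) / G u)) u :=
      by have := (Complex.hasStrictDerivAt_log hmem1).comp u hqs; exact this
    have hdivn := hlogs.div_const (n : ℂ)
    have hexps := (Complex.hasStrictDerivAt_exp _).comp u hdivn
    have hρs := hexps.const_mul r
    -- φfun
    set φfun : ℂ → ℂ := fun w => (w - u) * ρ w with hφfun
    have hφ0 : φfun u = 0 := by simp [hφfun]
    have hφs : HasStrictDerivAt φfun r u := by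
      have h1 : HasStrictDerivAt (fun w : ℂ => w - u) 1 u := (hasStrictDerivAt_id u).sub_const u
      have := h1.mul hρs
      simp only [hρu, one_mul, sub_self, zero_mul, mul_zero, add_zero] at this
      rw [Function.comp_apply, div_self hG0, Complex.log_one, zero_div, Complex.exp_zero,
        mul_one] at this
      exact this
    -- eventual identity  f w - f u = φfun w ^ n
    have hq_cont : ContinuousAt (fun w => G w / G u) u := hqs.hasDerivAt.continuousAt
    have hslit : ∀ᶠ w in 𝓝 u, G w / G u ∈ Complex.slitPlane := by
      apply hq_cont.eventually_mem
      exact Complex.isOpen_slitPlane.mem_nhds hmem1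
    have hpow : ∀ᶠ w in 𝓝 u, f w - f u = φfun w ^ n := by
      filter_upwards [hev, hslit] with w h1 h2
      have hGwne : G w ≠ 0 := by
        intro h0
        rw [h0, zero_div] at h2
        exact Complex.slitPlane_ne_zero h2 rfl
      have hqne : G w / G u ≠ 0 := div_ne_zero hGwne hG0
      have hexp_pow : Complex.exp (Complex.log (G w / G u) / (n : ℂ)) ^ n = G w / G u := by
        rw [← Complex.exp_nat_mul, mul_div_cancel₀ _ (by exact_mod_cast hn0 : (n : ℂ) ≠ 0),
          Complex.exp_log hqne]
      have hstep : φfun w ^ n = (w - u) ^ n * G w := by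
        calc φfun w ^ n
            = (w - u) ^ n * (r ^ n * Complex.exp (Complex.log (G w / G u) / (n : ℂ)) ^ n) := by
              simp only [hφfun, hρ]; rw [mul_pow, mul_pow]
          _ = (w - u) ^ n * G w := by
              rw [hexp_pow, hr, mul_comm (G u), div_mul_cancel₀ _ hG0]
      rw [hstep, h1]
      simp [smul_eq_mul]
    -- contradiction via two preimages
    have hmap : Filter.map φfun (𝓝 u) = 𝓝 (0 : ℂ) := by
      have := hφs.map_nhds_eq hrne
      rwa [hφ0] at this
    have hV : ({w | f w - f u = φfun w ^ n} ∩ s) ∈ 𝓝 u :=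
      Filter.inter_mem hpow (hs.mem_nhds hu)
    have himg : φfun '' ({w | f w - f u = φfun w ^ n} ∩ s) ∈ 𝓝 (0 : ℂ) := by
      rw [← hmap]
      exact Filter.image_mem_map hV
    obtain ⟨ε, hε, hball⟩ := Metric.mem_nhds_iff.mp himg
    set ω := Complex.exp (2 * Real.pi * Complex.I / (n : ℂ)) with hω
    have hprim := Complex.isPrimitiveRoot_exp n hn0
    have hω1 : ω ≠ 1 := hprim.ne_one (by omega)
    have hωn : ω ^ n = 1 := hprim.pow_eq_one
    have hωabs : ‖ω‖ = 1 := by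
      have : ω = Complex.exp (((2 * Real.pi / n : ℝ) : ℂ) * Complex.I) := by
        rw [hω]; congr 1; push_cast; ring
      rw [this, Complex.norm_exp_ofReal_mul_I]
    set δ := (ε / 2 : ℝ) with hδ
    have hδpos : (0:ℝ) < δ := by positivity
    have hv1 : (δ : ℂ) ∈ Metric.ball (0:ℂ) ε := by
      simp only [Metric.mem_ball, Complex.dist_eq, sub_zero]
      rw [Complex.norm_real, Real.norm_eq_abs, abs_of_pos hδpos, hδ]
      linarith
    have hv2 : (δ : ℂ) * ω ∈ Metric.ball (0:ℂ) ε := by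
      simp only [Metric.mem_ball, Complex.dist_eq, sub_zero, norm_mul, hωabs, mul_one]
      rw [Complex.norm_real, Real.norm_eq_abs, abs_of_pos hδpos, hδ]
      linarith
    obtain ⟨w1, hw1V, hw1⟩ := hball hv1
    obtain ⟨w2, hw2V, hw2⟩ := hball hv2
    have h12 : w1 ≠ w2 := by
      intro hcon
      rw [hcon, hw2] at hw1
      have hδne : (δ : ℂ) ≠ 0 := by exact_mod_cast hδpos.ne'
      exact hω1 (mul_left_cancel₀ hδne (hw1.trans (mul_one _).symm))
    have hfeq : f w1 = f w2 := by
      have e1 : f w1 - f u = (δ : ℂ) ^ n := by rw [hw1V.1, hw1]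
      have e2 : f w2 - f u = (δ : ℂ) ^ n := by
        rw [hw2V.1, hw2, mul_pow, hωn, mul_one]
      linear_combination e1 - e2
    exact h12 (hinj hw1V.2 hw2V.2 hfeq)

lemma diffAt_invFunOn {h : ℂ → ℂ} (hd : DifferentiableOn ℂ h unitDisc)
    (hinj : Set.InjOn h unitDisc) {S : Set ℂ} (hS : IsOpen S)
    (hSsub : S ⊆ h '' unitDisc) {w : ℂ} (hw : w ∈ S) :
    DifferentiableAt ℂ (Function.invFunOn h unitDisc) w := by
  have hOpen : IsOpen unitDisc := isOpen_unitDisc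
  set F := Function.invFunOn h unitDisc with hF
  have hex : ∃ a ∈ unitDisc, h a = w := by
    obtain ⟨a, ha, rfl⟩ := hSsub hw; exact ⟨a, ha, rfl⟩
  have huD : F w ∈ unitDisc := Function.invFunOn_mem hex
  have hhu : h (F w) = w := Function.invFunOn_eq hex
  set u := F w with hu
  have hfa : AnalyticAt ℂ h u := hd.analyticAt (hOpen.mem_nhds huD)
  obtain ⟨p, hp⟩ := hfa
  have hstrict : HasStrictDerivAt h (deriv h u) u := by
    have := hp.hasStrictDerivAt
    rwa [← hp.deriv] at this
  have hne : deriv h u ≠ 0 := deriv_ne_zero_of_injOn hOpen hd hinj huD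
  have hsf := hstrict.hasStrictFDerivAt_equiv hne
  set g := hstrict.localInverse h (deriv h u) u hne with hg
  have hgd : HasStrictDerivAt g (deriv h u)⁻¹ (h u) := hstrict.to_localInverse hne
  have hgdiff : DifferentiableAt ℂ g w := by
    rw [← hhu]; exact (HasStrictDerivAt.hasDerivAt hgd).differentiableAt
  have hgc : ContinuousAt g w := by
    rw [← hhu]; exact hsf.localInverse_continuousAt
  have hright : ∀ᶠ y in 𝓝 w, h (g y) = y := by
    rw [← hhu]; exact hsf.eventually_right_inverse
  have hgu : g w = u := by
    rw [← hhu]; exact hsf.localInverse_apply_image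
  have hgin : ∀ᶠ y in 𝓝 w, g y ∈ unitDisc := by
    apply hgc.eventually_mem
    rw [hgu]
    exact hOpen.mem_nhds huD
  have hyS : ∀ᶠ y in 𝓝 w, y ∈ S := hS.eventually_mem hw
  have hevq : F =ᶠ[𝓝 w] g := by
    filter_upwards [hright, hgin, hyS] with y h1 h2 h3
    have hexy : ∃ a ∈ unitDisc, h a = y := by
      obtain ⟨a, ha, rfl⟩ := hSsub h3; exact ⟨a, ha, rfl⟩
    exact hinj (Function.invFunOn_mem hexy) h2 (by rw [Function.invFunOn_eq hexy, h1])
  exact hevq.differentiableAt_iff.mpr hgdiff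

lemma cmap_im_identity (w0 : ℂ) (a : ℝ) (ξ : ℂ) (hξ : ξ ≠ 1) :
    ((w0 - ξ * ((starRingEnd ℂ) w0 + 2 * a * Complex.I)) / (1 - ξ)).im - a
      = (w0.im - a) * (1 - Complex.normSq ξ) / Complex.normSq (1 - ξ) := by
  have hns : Complex.normSq (1 - ξ) ≠ 0 := by
    rw [ne_eq, Complex.normSq_eq_zero, sub_eq_zero]
    exact fun hc => hξ hc.symm
  rw [Complex.div_im]
  field_simp
  simp only [Complex.sub_re, Complex.sub_im, Complex.add_re, Complex.add_im, Complex.mul_re,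
    Complex.mul_im, Complex.one_re, Complex.one_im, Complex.I_re, Complex.I_im,
    Complex.conj_re, Complex.conj_im, Complex.ofReal_re, Complex.ofReal_im,
    Complex.normSq_apply, Complex.re_ofNat, Complex.im_ofNat]
  ring

/-- Corollary 4.4: for a parabolic petal, `lim_{t → -∞} d_𝔻(z, φ_t(z))/t = 0`. -/
theorem stmt6 (φ : ℝ → ℂ → ℂ) (hφ : IsSemigroupD φ) (τ : ℂ)
    (hτ : IsDenjoyWolffBoundary φ τ) (h : ℂ → ℂ) (hh : IsKoenigsNE φ h)
    (Δ : Set ℂ) (hpar : IsParabolicPetal φ h Δ)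
    (hΔbij : ∀ t : ℝ, 0 ≤ t → Set.BijOn (φ t) Δ Δ)
    (hΔback : ∀ t : ℝ, t ≤ 0 → ∀ z ∈ Δ, φ t z ∈ Δ ∧ h (φ t z) = h z + (t : ℂ))
    (z : ℂ) (hz : z ∈ Δ) :
    Filter.Tendsto (fun t => dD z (φ t z) / t) Filter.atBot (nhds 0) := by
  classical
  obtain ⟨hpetal, hhp, hsub, -⟩ := hpar
  obtain ⟨a, hH⟩ := hhp
  -- Δ is contained in the unit disc
  have hΔD : Δ ⊆ unitDisc := by
    obtain ⟨-, z0, hz0, hΔeq⟩ := hpetal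
    intro x hx
    rw [hΔeq] at hx
    have h1 : x ∈ backwardInvSet φ := interior_subset (connectedComponentIn_subset _ _ hx)
    rw [backwardInvSet] at h1
    have h2 : x ∈ φ 0 '' unitDisc := Set.mem_iInter₂.mp h1 0 self_mem_Ici
    obtain ⟨y, hy, hxy⟩ := h2
    rw [hφ.id0 y hy] at hxy
    rwa [← hxy]
  have hzD : z ∈ unitDisc := hΔD hz
  have hzabs : ‖z‖ < 1 := hzD
  set w0 := h z with hw0def
  have hw0mem : w0 ∈ h '' Δ := ⟨z, hz, rfl⟩
  set b := w0.im with hbdef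
  have hba : b ≠ a := by
    rcases hH with hH | hH
    · rw [hH] at hw0mem
      exact ne_of_gt hw0mem
    · rw [hH] at hw0mem
      exact ne_of_lt hw0mem
  set β := |b - a| with hβdef
  have hβ : 0 < β := abs_pos.mpr (sub_ne_zero.mpr hba)
  set w0s := (starRingEnd ℂ) w0 + 2 * a * Complex.I with hw0s
  set cmap : ℂ → ℂ := fun ξ => (w0 - ξ * w0s) / (1 - ξ) with hcmap
  have hSopen : IsOpen (h '' Δ) := by
    rcases hH with hH | hH
    · rw [hH]; exact isOpen_lt continuous_const Complex.continuous_im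
    · rw [hH]; exact isOpen_lt Complex.continuous_im continuous_const
  -- the image of the unit disc under cmap lies in h '' Δ
  have hcm : ∀ ξ : ℂ, ‖ξ‖ < 1 → cmap ξ ∈ h '' Δ := by
    intro ξ hξ
    have hξ1 : ξ ≠ 1 := by
      intro hc; rw [hc] at hξ; simp at hξ
    have him : (cmap ξ).im - a
        = (w0.im - a) * (1 - Complex.normSq ξ) / Complex.normSq (1 - ξ) := by
      simp only [hcmap, hw0s]
      exact cmap_im_identity w0 a ξ hξ1
    have hnsq : Complex.normSq ξ < 1 := by
      have := Complex.sq_norm ξ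
      nlinarith [norm_nonneg ξ]
    have hnspos : 0 < Complex.normSq (1 - ξ) := by
      rw [Complex.normSq_pos, sub_ne_zero]
      exact fun hc => hξ1 hc.symm
    rcases hH with hH | hH
    · rw [hH]
      have hb : a < b := by rw [hH] at hw0mem; exact hw0mem
      have hpos : 0 < (w0.im - a) * (1 - Complex.normSq ξ) / Complex.normSq (1 - ξ) := by
        apply div_pos (mul_pos _ _) hnspos
        · rw [← hbdef]; linarith
        · linarith
      show a < (cmap ξ).im
      linarith [him ▸ hpos]
    · rw [hH]
      have hb : b < a := by rw [hH] at hw0mem; exact hw0mem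
      have hneg : (w0.im - a) * (1 - Complex.normSq ξ) / Complex.normSq (1 - ξ) < 0 := by
        apply div_neg_of_neg_of_pos (mul_neg_of_neg_of_pos _ _) hnspos
        · rw [← hbdef]; linarith
        · linarith
      show (cmap ξ).im < a
      linarith [him ▸ hneg]
  set F := Function.invFunOn h unitDisc with hFdef
  have hFc : ∀ ξ : ℂ, ‖ξ‖ < 1 → F (cmap ξ) ∈ unitDisc ∧ h (F (cmap ξ)) = cmap ξ := by
    intro ξ hξ
    obtain ⟨x, hx, hxe⟩ := hsub (hcm ξ hξ)
    exact ⟨Function.invFunOn_mem ⟨x, hx, hxe⟩, Function.invFunOn_eq ⟨x, hx, hxe⟩⟩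
  set ψ : ℂ → ℂ := fun ξ => (F (cmap ξ) - z) / (1 - (starRingEnd ℂ) z * F (cmap ξ)) with hψdef
  have hψdiff : DifferentiableOn ℂ ψ (Metric.ball 0 1) := by
    intro ξ hξmem
    have hξ : ‖ξ‖ < 1 := by
      simpa [Complex.dist_eq] using hξmem
    apply DifferentiableAt.differentiableWithinAt
    have hξ1 : (1 : ℂ) - ξ ≠ 0 := by
      rw [sub_ne_zero]
      intro hc; rw [← hc] at hξ; simp at hξ
    have hcdiff : DifferentiableAt ℂ cmap ξ := by
      simp only [hcmap]
      exact DifferentiableAt.div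
        ((differentiableAt_const w0).sub (differentiableAt_id.mul_const w0s))
        ((differentiableAt_const 1).sub differentiableAt_id) hξ1
    have hFdiff : DifferentiableAt ℂ F (cmap ξ) := by
      rw [hFdef]
      exact diffAt_invFunOn hh.holo hh.inj hSopen hsub (hcm ξ hξ)
    have hk : DifferentiableAt ℂ (fun ξ => F (cmap ξ)) ξ := hFdiff.comp ξ hcdiff
    have hFabs : ‖F (cmap ξ)‖ < 1 := (hFc ξ hξ).1
    simp only [hψdef]
    exact DifferentiableAt.div (hk.sub (differentiableAt_const z))
      ((differentiableAt_const 1).sub ((differentiableAt_const _).mul hk))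
      (one_sub_conj_mul_ne_zero hzabs hFabs)
  have hψmaps : Set.MapsTo ψ (Metric.ball 0 1) (Metric.ball 0 1) := by
    intro ξ hξmem
    have hξ : ‖ξ‖ < 1 := by
      simpa [Complex.dist_eq] using hξmem
    have hFabs : ‖F (cmap ξ)‖ < 1 := (hFc ξ hξ).1
    simp only [hψdef, Metric.mem_ball, Complex.dist_eq, sub_zero]
    exact mobius_abs_lt_one hzabs hFabs
  have hψ0 : ψ 0 = 0 := by
    have hc0 : cmap 0 = w0 := by simp [hcmap]
    have hF0 : F w0 = z := by
      rw [hFdef, hw0def]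
      exact hh.inj.leftInvOn_invFunOn hzD
    simp [hψdef, hc0, hF0]
  have hSchwarz : ∀ ξ : ℂ, ‖ξ‖ < 1 → ‖ψ ξ‖ ≤ ‖ξ‖ :=
    fun ξ hξ => Complex.norm_le_norm_of_mapsTo_ball hψdiff (hψmaps.mono_right Metric.ball_subset_closedBall) hψ0 hξ
  -- main estimate
  have hbound : ∀ t : ℝ, t < 0 →
      0 ≤ dD z (φ t z) ∧ dD z (φ t z) ≤ Real.log (1 + |t| / β) := by
    intro t ht
    obtain ⟨hptΔ, hpth⟩ := hΔback t ht.le z hz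
    have hptD : φ t z ∈ unitDisc := hΔD hptΔ
    have hptabs : ‖φ t z‖ < 1 := hptD
    set D : ℂ := (t : ℂ) + 2 * (b - a) * Complex.I with hD
    have hDim : D.im = 2 * (b - a) := by
      rw [hD]; simp
    have hbane : b - a ≠ 0 := sub_ne_zero.mpr hba
    have hDne : D ≠ 0 := by
      intro hc
      have := congrArg Complex.im hc
      rw [hDim] at this
      simp at this
      exact hbane (by linarith)
    set ξt : ℂ := (t : ℂ) / D with hξt
    have hDabs : ‖D‖ = Real.sqrt (t ^ 2 + 4 * (b - a) ^ 2) := by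
      rw [Complex.norm_def]
      congr 1
      rw [Complex.normSq_apply, hDim]
      rw [show D.re = t by rw [hD]; simp]
      ring
    have habsξt : ‖ξt‖ = |t| / Real.sqrt (t ^ 2 + 4 * (b - a) ^ 2) := by
      rw [hξt, norm_div, Complex.norm_real, Real.norm_eq_abs, hDabs]
    have hsq : (b - a) ^ 2 = β ^ 2 := (sq_abs (b - a)).symm
    have hsqrtpos : 0 < Real.sqrt (t ^ 2 + 4 * (b - a) ^ 2) := by
      apply Real.sqrt_pos.mpr
      nlinarith [hβ, hsq]
    have hξtlt : ‖ξt‖ < 1 := by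
      rw [habsξt, div_lt_one hsqrtpos]
      calc |t| = Real.sqrt (t ^ 2) := (Real.sqrt_sq_eq_abs t).symm
        _ < _ := Real.sqrt_lt_sqrt (sq_nonneg t) (by nlinarith [hβ, hsq])
    have hw0sub : w0 - w0s = 2 * ((b : ℂ) - (a : ℂ)) * Complex.I := by
      rw [hw0s]
      have hsc := Complex.sub_conj w0
      rw [hbdef]
      push_cast at hsc ⊢
      linear_combination hsc
    have hDt : D - (t : ℂ) = 2 * ((b : ℂ) - (a : ℂ)) * Complex.I := by
      rw [hD]; push_cast; ring
    have hDtne : D - (t : ℂ) ≠ 0 := by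
      rw [hDt]
      intro hc
      have := congrArg Complex.im hc
      simp at this
      exact hbane (by linarith)
    have h1mξt : (1 : ℂ) - ξt ≠ 0 := by
      have he : (1 : ℂ) - (t : ℂ) / D = (D - t) / D := by field_simp
      rw [hξt, he]
      exact div_ne_zero hDtne hDne
    have hcmt : cmap ξt = w0 + t := by
      simp only [hcmap]
      rw [div_eq_iff h1mξt, hξt]
      field_simp
      rw [hD]
      push_cast
      linear_combination (t : ℂ) * hw0sub
    have hFct : F (cmap ξt) = φ t z := by
      have he : h (φ t z) = cmap ξt := by
        rw [hcmt, hpth, hw0def]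
      rw [← he, hFdef]
      exact hh.inj.leftInvOn_invFunOn hptD
    have habsψ : ‖(φ t z - z) / (1 - (starRingEnd ℂ) z * (φ t z))‖
        ≤ ‖ξt‖ := by
      have hsw := hSchwarz ξt hξtlt
      simp only [hψdef] at hsw
      rwa [hFct] at hsw
    have hdd : dD z (φ t z)
        = arctanh (‖(φ t z - z) / (1 - (starRingEnd ℂ) z * (φ t z))‖) := by
      rw [dD]
      congr 1
      rw [norm_div, norm_div]
      congr 1
      rw [show z - φ t z = -(φ t z - z) by ring]
      exact norm_neg _
    constructor
    · rw [hdd]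
      exact arctanh_nonneg (norm_nonneg _) (lt_of_le_of_lt habsψ hξtlt)
    · rw [hdd]
      calc arctanh (‖(φ t z - z) / (1 - (starRingEnd ℂ) z * (φ t z))‖)
          ≤ arctanh (‖ξt‖) :=
            arctanh_mono (norm_nonneg _) habsψ hξtlt
        _ = arctanh (|t| / Real.sqrt (t ^ 2 + 4 * β ^ 2)) := by rw [habsξt, hsq]
        _ ≤ Real.log (1 + |t| / β) := arctanh_bound hβ
  -- pass to the limit
  have hlim : Tendsto (fun t : ℝ => Real.log (1 + |t| / β) / t) atBot (nhds 0) := by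
    have h1 : Tendsto (fun u : ℝ => 1 + u / β) atTop atTop :=
      tendsto_atTop_add_const_left _ 1 (tendsto_id.atTop_div_const hβ)
    have h2 : (fun u : ℝ => Real.log (1 + u / β)) =o[atTop] fun u : ℝ => 1 + u / β :=
      Real.isLittleO_log_id_atTop.comp_tendsto h1
    have h3 : (fun u : ℝ => 1 + u / β) =O[atTop] fun u : ℝ => u := by
      have hc : (fun _ : ℝ => (1 : ℝ)) =O[atTop] fun u : ℝ => u :=
        (Asymptotics.isLittleO_const_id_atTop (1 : ℝ)).isBigO
      have hd : (fun u : ℝ => u / β) =O[atTop] fun u : ℝ => u := by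
        simpa [div_eq_mul_inv, mul_comm] using
          (Asymptotics.isBigO_refl (fun u : ℝ => u) atTop).const_mul_left β⁻¹
      simpa using hc.add hd
    have h5 : Tendsto (fun u : ℝ => Real.log (1 + u / β) / u) atTop (nhds 0) :=
      (h2.trans_isBigO h3).tendsto_div_nhds_zero
    have h6 : Tendsto (fun t : ℝ => -(Real.log (1 + (-t) / β) / (-t))) atBot (nhds 0) := by
      have := (h5.comp tendsto_neg_atBot_atTop).neg
      simpa using this
    apply Filter.Tendsto.congr' _ h6
    filter_upwards [eventually_lt_atBot (0 : ℝ)] with t ht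
    rw [abs_of_neg ht, div_neg, neg_neg]
  apply tendsto_of_tendsto_of_tendsto_of_le_of_le' hlim tendsto_const_nhds
  · filter_upwards [eventually_lt_atBot (0 : ℝ)] with t ht
    obtain ⟨hge, hle⟩ := hbound t ht
    have hnn : 0 ≤ (dD z (φ t z) - Real.log (1 + |t| / β)) / t :=
      div_nonneg_iff.mpr (Or.inr ⟨by linarith, ht.le⟩)
    rw [sub_div] at hnn
    linarith
  · filter_upwards [eventually_lt_atBot (0 : ℝ)] with t ht
    obtain ⟨hge, hle⟩ := hbound t ht
    exact div_nonpos_of_nonneg_of_nonpos hge ht.le
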